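/- Let X be a nonempty compact topological space, I ⊆ ℝ an interval, and φ : I × X → ℝ a continuous function such that the partial derivative ∂ₜφ exists and is continuous on I × X. Define φ_max(t) = max_{x ∈ X} φ(t, x). Then for every interior t ∈ I, the upper right Dini derivative of φ_max at t satisfies limsup_{h → 0⁺} (φ_max(t+h) − φ_max(t))/h ≤ max{ ∂ₜφ(t, x) : x ∈ X, φ(t, x) = φ_max(t) }. In particular, if ∂ₜφ(t, x) ≤ 0 at every point x where φ(t, ·) attains its maximum, then the upper right Dini derivative of φ_max at t is ≤ 0. (This is Hamilton's maximum-principle lemma invoked in the step 'φₜ ≤ 0 at the spatial maximum, hence d⁺/dt φ_max(t) ≤ 0'.) -/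

import Mathlib

open scoped BigOperators Topology
open Set Filter

lemma mvt_aux' {a b D : ℝ} (hab : a ≤ b) {f f' : ℝ → ℝ}
    (hf : ∀ s ∈ Set.Icc a b, HasDerivWithinAt f (f' s) (Set.Icc a b) s)
    (hb : ∀ s ∈ Set.Icc a b, f' s ≤ D) : f b - f a ≤ D * (b - a) := by
  have hg : ∀ s ∈ Set.Icc a b,
      HasDerivWithinAt (fun s => D * s - f s) (D - f' s) (Set.Icc a b) s := fun s hs =>
    by simpa [Pi.sub_def] using ((hasDerivWithinAt_id s _).const_mul D).sub (hf s hs)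
  have hcont : ContinuousOn (fun s => D * s - f s) (Set.Icc a b) := fun s hs =>
    (hg s hs).continuousWithinAt
  have hmono : MonotoneOn (fun s => D * s - f s) (Set.Icc a b) :=
    monotoneOn_of_hasDerivWithinAt_nonneg (convex_Icc a b) hcont
      (fun s hs => (hg s (interior_subset hs)).mono interior_subset)
      (fun s hs => sub_nonneg.2 (hb s (interior_subset hs)))
  have h1 := hmono (Set.left_mem_Icc.2 hab) (Set.right_mem_Icc.2 hab) hab
  simp only at h1
  nlinarith

theorem dini_derivative_of_max_le (X : Type*) [TopologicalSpace X] [CompactSpace X]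
    [Nonempty X] (I : Set ℝ) (hI : I.OrdConnected)
    (φ φt : ℝ → X → ℝ)
    (hφ : ContinuousOn (fun p : ℝ × X => φ p.1 p.2) (I ×ˢ Set.univ))
    (hφt : ∀ t ∈ I, ∀ x, HasDerivWithinAt (fun s => φ s x) (φt t x) I t)
    (hφt_cont : ContinuousOn (fun p : ℝ × X => φt p.1 p.2) (I ×ˢ Set.univ)) :
    ∀ t ∈ interior I,
      (Filter.limsup (fun h : ℝ => ((⨆ x, φ (t + h) x) - ⨆ x, φ t x) / h)
          (nhdsWithin 0 (Set.Ioi 0))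
        ≤ sSup {d : ℝ | ∃ x, φ t x = (⨆ x', φ t x') ∧ d = φt t x}) ∧
      ((∀ x, φ t x = (⨆ x', φ t x') → φt t x ≤ 0) →
        Filter.limsup (fun h : ℝ => ((⨆ x, φ (t + h) x) - ⨆ x, φ t x) / h)
          (nhdsWithin 0 (Set.Ioi 0)) ≤ 0) := by
  intro t ht
  have tI : t ∈ I := interior_subset ht
  obtain ⟨r, hr, hball⟩ : ∃ r > 0, Metric.ball t r ⊆ interior I :=
    Metric.isOpen_iff.mp isOpen_interior t ht
  set M : ℝ → ℝ := fun s => ⨆ x, φ s x with hMdef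
  have contφ : ∀ s ∈ I, Continuous fun x => φ s x := fun s hs =>
    hφ.comp_continuous (continuous_const.prodMk continuous_id) fun x => ⟨hs, trivial⟩
  have contφt : ∀ s ∈ I, Continuous fun x => φt s x := fun s hs =>
    hφt_cont.comp_continuous (continuous_const.prodMk continuous_id) fun x => ⟨hs, trivial⟩
  have bdd : ∀ s ∈ I, BddAbove (Set.range (φ s)) := fun s hs =>
    (isCompact_range (contφ s hs)).bddAbove
  have hub : ∀ s ∈ I, ∀ x, φ s x ≤ M s := fun s hs x => le_ciSup (bdd s hs) x
  obtain ⟨x0, hx0⟩ : ∃ x0, ∀ y, φ t y ≤ φ t x0 := by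
    obtain ⟨x0, -, h⟩ := isCompact_univ.exists_isMaxOn Set.univ_nonempty
      ((contφ t tI).continuousOn)
    exact ⟨x0, fun y => h trivial⟩
  have hMx0 : φ t x0 = M t := le_antisymm (hub t tI x0) (ciSup_le hx0)
  set Smax : Set X := {x | φ t x = M t} with hSdef
  have hSx0 : x0 ∈ Smax := hMx0
  have hScomp : IsCompact Smax :=
    (isClosed_eq (contφ t tI) continuous_const).isCompact
  set D : Set ℝ := {d : ℝ | ∃ x, φ t x = M t ∧ d = φt t x} with hDdef
  have hDim : D = (fun x => φt t x) '' Smax := by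
    ext d
    constructor
    · rintro ⟨x, h1, h2⟩; exact ⟨x, h1, h2.symm⟩
    · rintro ⟨x, h1, h2⟩; exact ⟨x, h1, h2.symm⟩
  have hDne : D.Nonempty := ⟨φt t x0, x0, hMx0, rfl⟩
  have hDbdd : BddAbove D := by
    rw [hDim]; exact (hScomp.image (contφt t tI)).bddAbove
  set L : ℝ := sSup D with hLdef
  have hLub : ∀ x ∈ Smax, φt t x ≤ L := fun x hx => le_csSup hDbdd ⟨x, hx, rfl⟩
  -- lower eventual bound
  have hd : HasDerivAt (fun s => φ s x0) (φt t x0) t :=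
    (hφt t tI x0).hasDerivAt (mem_of_superset (isOpen_interior.mem_nhds ht) interior_subset)
  have hmap : Tendsto (fun h : ℝ => t + h) (𝓝[>] (0:ℝ)) (𝓝[≠] t) := by
    apply tendsto_nhdsWithin_of_tendsto_nhds_of_eventually_within
    · have : Tendsto (fun h : ℝ => t + h) (𝓝 (0:ℝ)) (𝓝 t) := by
        simpa [Pi.add_def] using (continuous_const.add continuous_id).tendsto (0:ℝ)
      exact this.mono_left nhdsWithin_le_nhds
    · filter_upwards [self_mem_nhdsWithin] with h (hh : (0:ℝ) < h)
      simp only [Set.mem_compl_iff, Set.mem_singleton_iff]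
      intro hc
      nlinarith [hc]
  have hslope : Tendsto (fun h : ℝ => (φ (t+h) x0 - φ t x0) / h) (𝓝[>] (0:ℝ))
      (𝓝 (φt t x0)) := by
    have := (hasDerivAt_iff_tendsto_slope.mp hd).comp hmap
    refine this.congr fun h => ?_
    simp [slope_def_field]
  have hIccsub : ∀ δ : ℝ, δ ≤ r/2 → Set.Icc t (t + δ) ⊆ interior I := by
    intro δ hδ s hs
    apply hball
    simp only [Metric.mem_ball, Real.dist_eq]
    rw [abs_lt]
    constructor <;> [linarith [hs.1]; linarith [hs.2, hr]]
  have lower : ∀ᶠ h in 𝓝[>] (0:ℝ), φt t x0 - 1 ≤ (M (t+h) - M t) / h := by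
    have h1 : ∀ᶠ h in 𝓝[>] (0:ℝ), φt t x0 - 1 ≤ (φ (t+h) x0 - φ t x0) / h :=
      hslope.eventually (eventually_ge_nhds (by linarith))
    filter_upwards [h1, Ioc_mem_nhdsGT (by linarith : (0:ℝ) < r/2)]
      with h hh hmem
    have htI : t + h ∈ I := interior_subset
      (hIccsub (r/2) le_rfl ⟨by linarith [hmem.1], by linarith [hmem.2]⟩)
    refine hh.trans ?_
    rw [hMx0]
    gcongr
    · exact le_of_lt hmem.1
    · exact hub (t+h) htI x0
  have hcobdd : IsCoboundedUnder (· ≤ ·) (𝓝[>] (0:ℝ))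
      (fun h : ℝ => (M (t+h) - M t) / h) :=
    isCoboundedUnder_le_of_eventually_le _ lower
  -- key eventual upper bound
  have key : ∀ ε : ℝ, 0 < ε → ∀ᶠ h in 𝓝[>] (0:ℝ), (M (t+h) - M t) / h ≤ L + ε := by
    intro ε hε
    have hOopen : IsOpen ((interior I ×ˢ (Set.univ : Set X)) ∩
        ((fun p : ℝ × X => φt p.1 p.2) ⁻¹' Set.Iio (L + ε))) :=
      (hφt_cont.mono (Set.prod_mono interior_subset (subset_refl _))).isOpen_inter_preimage
        (isOpen_interior.prod isOpen_univ) isOpen_Iio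
    have hsub : ({t} : Set ℝ) ×ˢ Smax ⊆ (interior I ×ˢ (Set.univ : Set X)) ∩
        ((fun p : ℝ × X => φt p.1 p.2) ⁻¹' Set.Iio (L + ε)) := by
      rintro ⟨s, x⟩ ⟨hs, hx⟩
      rw [Set.mem_singleton_iff] at hs
      subst hs
      exact ⟨⟨ht, trivial⟩, lt_of_le_of_lt (hLub x hx) (by linarith)⟩
    obtain ⟨U, V, hUo, hVo, htU, hSV, hUV⟩ :=
      generalized_tube_lemma isCompact_singleton hScomp hOopen hsub
    obtain ⟨δ₁, hδ₁, hballU⟩ := Metric.isOpen_iff.mp hUo t (htU rfl)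
    set δ₂ : ℝ := min (δ₁/2) (r/2) with hδ₂def
    have hδ₂pos : 0 < δ₂ := lt_min (by linarith) (by linarith)
    have hIccU : Set.Icc t (t+δ₂) ⊆ U := by
      intro s hs
      apply hballU
      simp only [Metric.mem_ball, Real.dist_eq, abs_lt]
      have h1 : δ₂ ≤ δ₁/2 := min_le_left _ _
      constructor <;> [linarith [hs.1]; linarith [hs.2]]
    have hIccI2 : Set.Icc t (t+δ₂) ⊆ I :=
      (hIccsub δ₂ (min_le_right _ _)).trans interior_subset
    have hφtV : ∀ s ∈ Set.Icc t (t+δ₂), ∀ x ∈ V, φt s x < L + ε := by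
      intro s hs x hx
      have := (hUV (show ((s, x) : ℝ × X) ∈ U ×ˢ V from ⟨hIccU hs, hx⟩)).2
      simpa using this
    obtain ⟨C, hC⟩ := (isCompact_Icc.prod isCompact_univ).exists_bound_of_continuousOn
      (hφt_cont.mono (Set.prod_mono hIccI2 (subset_refl _)))
    have mvt : ∀ x : X, ∀ h ∈ Set.Ioc (0:ℝ) δ₂, ∀ Db : ℝ,
        (∀ s ∈ Set.Icc t (t+h), φt s x ≤ Db) → φ (t+h) x - φ t x ≤ Db * h := by
      intro x h hh Db hDb
      have hsub2 : Set.Icc t (t + h) ⊆ I := fun s hs =>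
        hIccI2 ⟨hs.1, hs.2.trans (by linarith [hh.2])⟩
      have := mvt_aux' (a := t) (b := t+h) (D := Db) (f := fun s => φ s x)
        (f' := fun s => φt s x) (by linarith [hh.1])
        (fun s hs => (hφt s (hsub2 hs) x).mono hsub2) hDb
      simpa using this
    have hVcase : ∀ h ∈ Set.Ioc (0:ℝ) δ₂, ∀ x ∈ V, φ (t+h) x ≤ M t + (L+ε)*h := by
      intro h hh x hx
      have hbnd : ∀ s ∈ Set.Icc t (t+h), φt s x ≤ L + ε := fun s hs =>
        le_of_lt (hφtV s ⟨hs.1, hs.2.trans (by linarith [hh.2])⟩ x hx)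
      have h1 := mvt x h hh (L+ε) hbnd
      have h2 := hub t tI x
      linarith
    by_cases hV : ∀ x, x ∈ V
    · filter_upwards [Ioc_mem_nhdsGT hδ₂pos] with h hh
      have hMb : M (t+h) ≤ M t + (L+ε)*h := ciSup_le fun x => hVcase h hh x (hV x)
      rw [div_le_iff₀ hh.1]
      linarith
    · push_neg at hV
      obtain ⟨y1, hy1⟩ := hV
      have hKcomp : IsCompact (Vᶜ) := hVo.isClosed_compl.isCompact
      obtain ⟨y0, hy0K, hy0⟩ := hKcomp.exists_isMaxOn ⟨y1, hy1⟩ (contφ t tI).continuousOn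
      have hM'lt : φ t y0 < M t :=
        lt_of_le_of_ne (hub t tI y0) (fun hc => hy0K (hSV hc))
      set h₀ : ℝ := (M t - φ t y0) / (|C - (L+ε)| + 1) with hh₀def
      have habsne : (0:ℝ) < |C - (L+ε)| + 1 := by positivity
      have hh₀pos : 0 < h₀ := div_pos (by linarith) habsne
      filter_upwards [Ioc_mem_nhdsGT (lt_min hδ₂pos hh₀pos)] with h hh
      have hhδ₂ : h ≤ δ₂ := hh.2.trans (min_le_left _ _)
      have hhh₀ : h ≤ h₀ := hh.2.trans (min_le_right _ _)
      have hMb : M (t+h) ≤ M t + (L+ε)*h := by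
        apply ciSup_le
        intro x
        by_cases hx : x ∈ V
        · exact hVcase h ⟨hh.1, hhδ₂⟩ x hx
        · have hbnd : ∀ s ∈ Set.Icc t (t+h), φt s x ≤ C := fun s hs =>
            (le_abs_self _).trans
              (hC (s, x) ⟨⟨hs.1, hs.2.trans (by linarith)⟩, trivial⟩)
          have h1 := mvt x h ⟨hh.1, hhδ₂⟩ C hbnd
          have h2 : φ t x ≤ φ t y0 := hy0 hx
          have h3 : (C - (L+ε)) * h ≤ M t - φ t y0 := by
            have e1 : (C - (L+ε)) * h ≤ (|C - (L+ε)| + 1) * h := by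
              have := le_abs_self (C - (L+ε))
              nlinarith [hh.1]
            have e2 : (|C-(L+ε)|+1) * h ≤ (|C-(L+ε)|+1) * h₀ := by
              nlinarith [abs_nonneg (C-(L+ε))]
            have e3 : (|C-(L+ε)|+1) * h₀ = M t - φ t y0 := by
              rw [hh₀def, mul_comm, div_mul_cancel₀ _ (ne_of_gt habsne)]
            linarith
          linarith
      rw [div_le_iff₀ hh.1]
      linarith
  have main : Filter.limsup (fun h : ℝ => (M (t + h) - M t) / h) (𝓝[>] (0:ℝ)) ≤ L := by
    by_contra hc
    push_neg at hc
    have h2 := Filter.limsup_le_of_le hcobdd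
      (key ((Filter.limsup (fun h : ℝ => (M (t + h) - M t) / h) (𝓝[>] (0:ℝ)) - L)/2)
        (by linarith))
    linarith
  constructor
  · exact main
  · intro hyp
    refine main.trans (csSup_le hDne ?_)
    rintro d ⟨x, h1, rfl⟩
    exact hyp x h1
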